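/- For every natural number d there exist integers q₁, …, q_{d+1} such that for all real λ ≠ 0: (e^λ − e^{−λ})^{−1} · iteratedDeriv (2d+1) (fun x => 2/(Real.exp (2x) − 1)) λ = Σ_{j=1}^{d+1} q_j / (e^λ − e^{−λ})^{2j+1}. -/

import Mathlib

noncomputable def Sh (x : ℝ) : ℝ := Real.exp x - Real.exp (-x)
noncomputable def Ch (x : ℝ) : ℝ := Real.exp x + Real.exp (-x)

lemma hasDerivAt_Sh (x : ℝ) : HasDerivAt Sh (Ch x) x := by
  have h := (Real.hasDerivAt_exp x).fun_sub ((hasDerivAt_neg x).exp)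
  show HasDerivAt (fun x => Real.exp x - Real.exp (-x)) (Ch x) x
  simpa [Sh, Ch, sub_neg_eq_add, mul_neg] using h

lemma hasDerivAt_Ch (x : ℝ) : HasDerivAt Ch (Sh x) x := by
  have h := (Real.hasDerivAt_exp x).fun_add ((hasDerivAt_neg x).exp)
  show HasDerivAt (fun x => Real.exp x + Real.exp (-x)) (Sh x) x
  simpa [Sh, Ch, mul_neg, sub_eq_add_neg] using h

lemma Sh_ne_zero {x : ℝ} (hx : x ≠ 0) : Sh x ≠ 0 := by
  simp only [Sh, sub_ne_zero]
  intro h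
  have := Real.exp_injective h
  apply hx; linarith

lemma Ch_sq (x : ℝ) : Ch x ^ 2 = Sh x ^ 2 + 4 := by
  have h : Real.exp x * Real.exp (-x) = 1 := by
    rw [← Real.exp_add]; simp
  simp only [Sh, Ch]; nlinarith [h]

lemma base_case (l : ℝ) (hl : l ≠ 0) :
    iteratedDeriv 1 (fun x : ℝ => 2 / (Real.exp (2*x) - 1)) l
      = (-4 : ℝ) * ((Sh l) ^ 2)⁻¹ := by
  have h2l : Real.exp (2*l) - 1 ≠ 0 := by
    rw [sub_ne_zero]
    intro h
    have := Real.exp_injective (h.trans Real.exp_zero.symm)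
    exact hl (by linarith)
  have h1 : HasDerivAt (fun x : ℝ => Real.exp (2*x) - 1) (Real.exp (2*l) * 2) l := by
    have : HasDerivAt (fun x : ℝ => (2:ℝ)*x) 2 l := by
      simpa using (hasDerivAt_id l).const_mul (2:ℝ)
    exact (this.exp).sub_const 1
  have hD : HasDerivAt (fun x : ℝ => 2 / (Real.exp (2*x) - 1))
      (2 * (-(Real.exp (2*l) * 2) / (Real.exp (2*l) - 1)^2)) l := by
    simpa [div_eq_mul_inv] using (h1.inv h2l).const_mul (2:ℝ)
  rw [iteratedDeriv_one, hD.deriv]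
  have ht : Real.exp l ≠ 0 := Real.exp_ne_zero l
  have h2 : Real.exp (2*l) = Real.exp l ^ 2 := by
    rw [two_mul, Real.exp_add]; ring
  have hS : Sh l ≠ 0 := Sh_ne_zero hl
  rw [h2] at h2l ⊢
  simp only [Sh, Real.exp_neg] at hS ⊢
  have hk : (Real.exp l - (Real.exp l)⁻¹)^2 = (Real.exp l^2-1)^2 / Real.exp l^2 := by
    field_simp
  rw [hk, inv_div]
  field_simp
  ring

lemma key_lemma (d : ℕ) : ∃ a : ℕ → ℤ, ∀ l : ℝ, l ≠ 0 →
    iteratedDeriv (2*d+1) (fun x : ℝ => 2 / (Real.exp (2*x) - 1)) l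
      = ∑ j ∈ Finset.range (d+1), (a j : ℝ) * ((Sh l) ^ (2*j+2))⁻¹ := by
  induction d with
  | zero =>
    refine ⟨fun _ => -4, fun l hl => ?_⟩
    simpa using base_case l hl
  | succ d ih =>
    obtain ⟨a, ih⟩ := ih
    set b : ℕ → ℤ := fun j => (-(2*(j:ℤ))-2)*a j with hb
    refine ⟨fun k => (if k < d+1 then (-(2*(k:ℤ))-2)*b k else 0)
        + (if k = 0 then 0 else (-4*(2*(k:ℤ)+1))*b (k-1)), fun l hl => ?_⟩
    -- the function H = derivative of order 2d+2
    set H : ℝ → ℝ := fun x =>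
      Ch x * ∑ j ∈ Finset.range (d+1), (b j : ℝ) * ((Sh x) ^ (2*j+3))⁻¹ with hH
    have hG : ∀ x : ℝ, x ≠ 0 →
        HasDerivAt (fun y => ∑ j ∈ Finset.range (d+1), (a j : ℝ) * ((Sh y) ^ (2*j+2))⁻¹)
          (H x) x := by
      intro x hx
      have hS := Sh_ne_zero hx
      have h1 : HasDerivAt (fun y => ∑ j ∈ Finset.range (d+1), (a j : ℝ) * ((Sh y) ^ (2*j+2))⁻¹)
          (∑ j ∈ Finset.range (d+1),
            (a j : ℝ) * (-((((2*j+2:ℕ)):ℝ) * Sh x ^ (2*j+2-1) * Ch x) / (Sh x ^ (2*j+2))^2)) x := by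
        apply HasDerivAt.fun_sum
        intro j _
        exact HasDerivAt.const_mul _ (((hasDerivAt_Sh x).pow (2*j+2)).inv (pow_ne_zero _ hS))
      convert h1 using 1
      simp only [hH]
      rw [Finset.mul_sum]
      apply Finset.sum_congr rfl
      intro j _
      have h21 : 2*j+2-1 = 2*j+1 := by omega
      rw [h21]
      simp only [hb]
      push_cast
      field_simp
      ring
    have hA : ∀ x : ℝ, x ≠ 0 →
        iteratedDeriv (2*d+1+1) (fun x : ℝ => 2 / (Real.exp (2*x) - 1)) x = H x := by
      intro x hx
      rw [iteratedDeriv_succ]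
      have he : deriv (iteratedDeriv (2*d+1) (fun x : ℝ => 2 / (Real.exp (2*x) - 1))) x
          = deriv (fun y => ∑ j ∈ Finset.range (d+1), (a j : ℝ) * ((Sh y) ^ (2*j+2))⁻¹) x := by
        apply Filter.EventuallyEq.deriv_eq
        filter_upwards [isOpen_ne.mem_nhds hx] with y hy
        exact ih y hy
      rw [he, (hG x hx).deriv]
    have hS := Sh_ne_zero hl
    have h23 : 2*(d+1)+1 = (2*d+1+1)+1 := by ring
    rw [h23, iteratedDeriv_succ]
    have he2 : deriv (iteratedDeriv (2*d+1+1) (fun x : ℝ => 2 / (Real.exp (2*x) - 1))) l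
        = deriv H l := by
      apply Filter.EventuallyEq.deriv_eq
      filter_upwards [isOpen_ne.mem_nhds hl] with y hy
      exact hA y hy
    rw [he2]
    have hT : HasDerivAt (fun y => ∑ j ∈ Finset.range (d+1), (b j : ℝ) * ((Sh y) ^ (2*j+3))⁻¹)
        (∑ j ∈ Finset.range (d+1),
          (b j : ℝ) * (-((((2*j+3:ℕ)):ℝ) * Sh l ^ (2*j+3-1) * Ch l) / (Sh l ^ (2*j+3))^2)) l := by
      apply HasDerivAt.fun_sum
      intro j _
      exact HasDerivAt.const_mul _ (((hasDerivAt_Sh l).pow (2*j+3)).inv (pow_ne_zero _ hS))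
    have hHd : HasDerivAt H
        (Sh l * (∑ j ∈ Finset.range (d+1), (b j : ℝ) * ((Sh l) ^ (2*j+3))⁻¹)
          + Ch l * (∑ j ∈ Finset.range (d+1),
            (b j : ℝ) * (-((((2*j+3:ℕ)):ℝ) * Sh l ^ (2*j+3-1) * Ch l) / (Sh l ^ (2*j+3))^2))) l := by
      simp only [hH]
      exact (hasDerivAt_Ch l).mul hT
    rw [hHd.deriv]
    -- algebraic identity
    have hC2 : Ch l ^ 2 = Sh l ^ 2 + 4 := Ch_sq l
    have hLmid : Sh l * (∑ j ∈ Finset.range (d+1), (b j : ℝ) * ((Sh l) ^ (2*j+3))⁻¹)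
          + Ch l * (∑ j ∈ Finset.range (d+1),
            (b j : ℝ) * (-((((2*j+3:ℕ)):ℝ) * Sh l ^ (2*j+3-1) * Ch l) / (Sh l ^ (2*j+3))^2))
        = ∑ j ∈ Finset.range (d+1),
            ((-(2*(j:ℝ))-2) * (b j : ℝ) * ((Sh l)^(2*j+2))⁻¹
              + (-4*(2*(j:ℝ)+3)) * (b j : ℝ) * ((Sh l)^(2*j+4))⁻¹) := by
      rw [Finset.mul_sum, Finset.mul_sum, ← Finset.sum_add_distrib]
      apply Finset.sum_congr rfl
      intro j _
      have h21 : 2*j+3-1 = 2*j+2 := by omega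
      rw [h21]
      have e1 : Ch l * ((b j : ℝ) * (-((((2*j+3:ℕ)):ℝ) * Sh l ^ (2*j+2) * Ch l) / (Sh l ^ (2*j+3))^2))
          = (b j : ℝ) * (-((((2*j+3:ℕ)):ℝ) * Sh l ^ (2*j+2) * (Sh l^2+4)) / (Sh l ^ (2*j+3))^2) := by
        rw [← hC2]; ring
      rw [e1]
      push_cast
      field_simp
      ring
    rw [hLmid]
    rw [Finset.sum_add_distrib]
    have hfst : ∑ k ∈ Finset.range (d+1+1),
          (((if k < d+1 then (-(2*(k:ℤ))-2)*b k else 0)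
            + (if k = 0 then 0 else (-4*(2*(k:ℤ)+1))*b (k-1)) : ℤ) : ℝ) * ((Sh l)^(2*k+2))⁻¹
        = ∑ k ∈ Finset.range (d+1+1),
            ((((if k < d+1 then (-(2*(k:ℤ))-2)*b k else 0) : ℤ) : ℝ) * ((Sh l)^(2*k+2))⁻¹)
            + ∑ k ∈ Finset.range (d+1+1),
            ((((if k = 0 then 0 else (-4*(2*(k:ℤ)+1))*b (k-1)) : ℤ) : ℝ) * ((Sh l)^(2*k+2))⁻¹) := by
      rw [← Finset.sum_add_distrib]
      apply Finset.sum_congr rfl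
      intro k _
      push_cast
      ring
    rw [hfst]
    congr 1
    · conv_rhs => rw [Finset.sum_range_succ]
      rw [if_neg (lt_irrefl (d+1)), Int.cast_zero, zero_mul, add_zero]
      apply Finset.sum_congr rfl
      intro k hk
      rw [if_pos (Finset.mem_range.mp hk)]
      push_cast
      ring
    · conv_rhs => rw [Finset.sum_range_succ']
      rw [if_pos rfl, Int.cast_zero, zero_mul, add_zero]
      apply Finset.sum_congr rfl
      intro k _
      rw [if_neg (Nat.succ_ne_zero k)]
      have h1 : k + 1 - 1 = k := rfl
      have h2 : 2*(k+1)+2 = 2*k+4 := by ring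
      rw [h1, h2]
      push_cast
      ring

/-- For every `d : ℕ` there exist integers `q₁, …, q_{d+1}` such that for all
real `λ ≠ 0`:
`(e^λ - e^{-λ})⁻¹ · (d/dλ)^{2d+1} (2/(e^{2λ} - 1)) = Σ_{j=1}^{d+1} q_j / (e^λ - e^{-λ})^{2j+1}`. -/
theorem symmetric_time_combination_integral_coeffs
    (d : ℕ) :
    ∃ q : ℕ → ℤ, ∀ l : ℝ, l ≠ 0 →
      (Real.exp l - Real.exp (-l))⁻¹ *
          iteratedDeriv (2 * d + 1) (fun x : ℝ => 2 / (Real.exp (2 * x) - 1)) l =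
        ∑ j ∈ Finset.Icc 1 (d + 1),
          (q j : ℝ) / (Real.exp l - Real.exp (-l)) ^ (2 * j + 1) := by
  obtain ⟨a, ha⟩ := key_lemma d
  refine ⟨fun j => a (j-1), fun l hl => ?_⟩
  have hS : Sh l ≠ 0 := Sh_ne_zero hl
  have hSh : Real.exp l - Real.exp (-l) = Sh l := rfl
  rw [hSh, ha l hl, Finset.mul_sum]
  rw [← Finset.Ico_add_one_right_eq_Icc, Finset.sum_Ico_eq_sum_range]
  have hr : d + 1 + 1 - 1 = d + 1 := rfl
  rw [hr]
  apply Finset.sum_congr rfl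
  intro j _
  simp only []
  have h1 : 1 + j - 1 = j := by omega
  rw [h1]
  have h2 : 2 * (1 + j) + 1 = 2 * j + 3 := by ring
  rw [h2]
  have h3 : Sh l ^ (2*j+3) = Sh l ^ (2*j+2) * Sh l := by ring
  rw [h3]
  field_simp
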